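/- Let f : X → Y be a morphism of irreducible schemes with dim Y < ∞, and suppose X is caténaire. If f is length-preserving and level-separated, then f is injective on underlying points. -/

import Mathlib

open AlgebraicGeometry

/-- Paper convention: `Spz x y` (written `x → y`) means `y` is a specialization of `x`,
i.e. `y` lies in the closure of `{x}`. -/
def Spz {α : Type*} [TopologicalSpace α] (x y : α) : Prop := y ∈ closure ({x} : Set α)

/-- `IsSpzChain c n`: the first `n` steps of `c` form a strict chain of specializations. -/
def IsSpzChain {α : Type*} [TopologicalSpace α] (c : ℕ → α) (n : ℕ) : Prop :=
  ∀ i < n, Spz (c i) (c (i + 1)) ∧ c i ≠ c (i + 1)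

/-- The length `l(x,y) ∈ ℕ∞`: the supremum of lengths of strict chains of specializations
from `x` to `y`. -/
noncomputable def specLength {α : Type*} [TopologicalSpace α] (x y : α) : ℕ∞ :=
  ⨆ n ∈ {n : ℕ | ∃ c : ℕ → α, c 0 = x ∧ c n = y ∧ IsSpzChain c n}, (n : ℕ∞)

/-- The length of a subset: the supremum of `l(x,y)` over specializations `x → y` in `W`. -/
noncomputable def setLength {α : Type*} [TopologicalSpace α] (W : Set α) : ℕ∞ :=
  ⨆ x ∈ W, ⨆ y ∈ W, ⨆ (_ : Spz x y), specLength x y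

/-- The length of a point: the length of the closure of `{x}`. -/
noncomputable def ptLength {α : Type*} [TopologicalSpace α] (x : α) : ℕ∞ :=
  setLength (closure {x})

/-- A map is length-preserving if `l(f x, f y) = l(x, y)` for every specialization
`x → y` of finite length. -/
def LengthPreserving {α β : Type*} [TopologicalSpace α] [TopologicalSpace β] (f : α → β) : Prop :=
  ∀ x y, Spz x y → specLength x y < ⊤ → specLength (f x) (f y) = specLength x y

/-- Two points are Sp-connected if one is a specialization of the other. -/
def SpConnected {α : Type*} [TopologicalSpace α] (x y : α) : Prop := Spz x y ∨ Spz y x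

/-- `f` is level-separated if it sends Sp-disconnected points of equal length to
Sp-disconnected points. -/
def LevelSeparated {α β : Type*} [TopologicalSpace α] [TopologicalSpace β] (f : α → β) : Prop :=
  ∀ x y, ¬SpConnected x y → ptLength x = ptLength y → ¬SpConnected (f x) (f y)

/-- A space is caténaire if `l(x,z) = l(x,y) + l(y,z)` for all specializations
`x → y → z`. -/
def Catenaire (α : Type*) [TopologicalSpace α] : Prop :=
  ∀ x y z : α, Spz x y → Spz y z → specLength x z = specLength x y + specLength y z

/-! ### Auxiliary lemmas -/

section Basics
variable {α : Type*} [TopologicalSpace α] {x y z : α}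

lemma spz_iff_specializes : Spz x y ↔ x ⤳ y := specializes_iff_mem_closure.symm

lemma spz_refl (x : α) : Spz x x := spz_iff_specializes.2 (specializes_refl x)

lemma Spz.trans' (h : Spz x y) (h' : Spz y z) : Spz x z :=
  spz_iff_specializes.2 ((spz_iff_specializes.1 h).trans (spz_iff_specializes.1 h'))

lemma Spz.antisymm' [T0Space α] (h : Spz x y) (h' : Spz y x) : x = y :=
  ((spz_iff_specializes.1 h).antisymm (spz_iff_specializes.1 h')).eq

lemma Spz.map' {β : Type*} [TopologicalSpace β] {f : α → β} (h : Spz x y) (hf : Continuous f) :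
    Spz (f x) (f y) := spz_iff_specializes.2 ((spz_iff_specializes.1 h).map hf)

lemma IsSpzChain.mono {c : ℕ → α} {m n : ℕ} (h : IsSpzChain c n) (hmn : m ≤ n) :
    IsSpzChain c m := fun i hi => h i (lt_of_lt_of_le hi hmn)

lemma IsSpzChain.spz_le {c : ℕ → α} {n : ℕ} (h : IsSpzChain c n) {i j : ℕ} (hij : i ≤ j)
    (hj : j ≤ n) : Spz (c i) (c j) := by
  induction j with
  | zero => simp_all [Nat.le_zero.1 hij, spz_refl]
  | succ k ih =>
    rcases Nat.lt_or_ge i (k+1) with hh | hh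
    · exact (ih (Nat.lt_succ_iff.1 hh) (le_trans (Nat.le_succ k) hj)).trans'
        (h k (Nat.lt_of_succ_le hj)).1
    · have : i = k + 1 := le_antisymm hij hh
      subst this; exact spz_refl _

lemma chain_le_specLength {c : ℕ → α} {n : ℕ} (h0 : c 0 = x) (hn : c n = y)
    (hc : IsSpzChain c n) : (n : ℕ∞) ≤ specLength x y :=
  le_biSup (fun n : ℕ => (n : ℕ∞)) (Set.mem_setOf.2 ⟨c, h0, hn, hc⟩)

lemma specLength_le_iff {m : ℕ∞} : specLength x y ≤ m ↔
    ∀ n : ℕ, (∃ c : ℕ → α, c 0 = x ∧ c n = y ∧ IsSpzChain c n) → (n : ℕ∞) ≤ m := iSup₂_le_iff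

lemma specLength_self [T0Space α] (x : α) : specLength x x = 0 := by
  refine le_antisymm (specLength_le_iff.2 fun n hn => ?_) zero_le
  rcases hn with ⟨c, h0, hn, hc⟩
  rcases Nat.eq_zero_or_pos n with rfl | hpos
  · simp
  exfalso
  have h1 : Spz (c 0) (c 1) := (hc 0 hpos).1
  have h2 : Spz (c 1) (c n) := hc.spz_le hpos le_rfl
  have h3 : Spz (c 1) (c 0) := by
    have hxy : c n = c 0 := by rw [h0, hn]
    simpa [hxy] using h2
  exact (hc 0 hpos).2 (h1.antisymm' h3)

lemma one_le_specLength (h : Spz x y) (hne : x ≠ y) : 1 ≤ specLength x y := by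
  have : ((1 : ℕ) : ℕ∞) ≤ specLength x y := by
    refine chain_le_specLength (c := fun i => if i = 0 then x else y) rfl (by simp) ?_
    intro i hi
    interval_cases i
    simpa using ⟨h, hne⟩
  simpa using this

lemma exists_ge_of_le_specLength {n : ℕ} (hn : n ≠ 0) (h : (n : ℕ∞) ≤ specLength x y) :
    ∃ m : ℕ, n ≤ m ∧ ∃ c : ℕ → α, c 0 = x ∧ c m = y ∧ IsSpzChain c m := by
  by_contra hcon
  push_neg at hcon
  have hle : specLength x y ≤ ((n - 1 : ℕ) : ℕ∞) := by
    refine specLength_le_iff.2 fun m hm => ?_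
    have hmn : m < n := by
      by_contra hge
      rcases hm with ⟨c, h0, hm, hcc⟩
      exact hcon m (le_of_not_gt hge) c h0 hm hcc
    exact_mod_cast Nat.le_pred_of_lt hmn
  have := h.trans hle
  have : n ≤ n - 1 := by exact_mod_cast this
  omega
end Basics

section Jump

lemma sSup_isPrime_of_isChain' {R : Type*} [CommRing R] {s : Set (Ideal R)} (hne : s.Nonempty)
    (hc : IsChain (· ≤ ·) s) (hp : ∀ p ∈ s, p.IsPrime) : (sSup s).IsPrime := by
  have hdir : DirectedOn (· ≤ ·) s := hc.directedOn
  have hmem : ∀ z : R, z ∈ sSup s ↔ ∃ p ∈ s, z ∈ p := fun z =>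
    Submodule.mem_sSup_of_directed hne hdir
  constructor
  · intro h
    obtain ⟨p, hps, hp1⟩ := (hmem 1).1 (h ▸ Submodule.mem_top)
    exact (hp p hps).ne_top ((Ideal.eq_top_iff_one p).2 hp1)
  · intro a b hab
    obtain ⟨p, hps, hpab⟩ := (hmem _).1 hab
    rcases (hp p hps).mem_or_mem hpab with h | h
    · exact Or.inl ((hmem a).2 ⟨p, hps, h⟩)
    · exact Or.inr ((hmem b).2 ⟨p, hps, h⟩)

/-- Kaplansky: between two strictly comparable primes there is an adjacent pair of primes. -/
lemma exists_adjacent_primes {R : Type*} [CommRing R] (p q : Ideal R) (hp : p.IsPrime)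
    (hq : q.IsPrime) (hpq : p < q) :
    ∃ p₁ q₁ : Ideal R, p₁.IsPrime ∧ q₁.IsPrime ∧ p ≤ p₁ ∧ p₁ ≤ q₁ ∧ q₁ ≤ q ∧ p₁ ≠ q₁ ∧
      ∀ r : Ideal R, r.IsPrime → p₁ ≤ r → r ≤ q₁ → r = p₁ ∨ r = q₁ := by
  obtain ⟨a, haq, hap⟩ := SetLike.exists_of_lt hpq
  set S : Set (Ideal R) := {r | r.IsPrime ∧ p ≤ r ∧ r ≤ q ∧ a ∉ r} with hS
  have hpS : p ∈ S := ⟨hp, le_rfl, hpq.le, hap⟩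
  have hub : ∀ c ⊆ S, IsChain (· ≤ ·) c → ∀ y ∈ c, ∃ ub ∈ S, ∀ z ∈ c, z ≤ ub := by
    intro c hcS hchain y hyc
    have hcne : c.Nonempty := ⟨y, hyc⟩
    have hprime : (sSup c).IsPrime :=
      sSup_isPrime_of_isChain' hcne hchain fun r hr => (hcS hr).1
    have hdir : DirectedOn (· ≤ ·) c := hchain.directedOn
    refine ⟨sSup c, ⟨hprime, ?_, ?_, ?_⟩, fun z hz => le_sSup hz⟩
    · exact (hcS hyc).2.1.trans (le_sSup hyc)
    · exact sSup_le fun r hr => (hcS hr).2.2.1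
    · intro hmem
      obtain ⟨r, hrc, har⟩ := (Submodule.mem_sSup_of_directed hcne hdir).1 hmem
      exact (hcS hrc).2.2.2 har
  obtain ⟨p₁, hpp₁, hmax⟩ := zorn_le_nonempty₀ S hub p hpS
  obtain ⟨hp₁prime, hpp₁', hp₁q, hap₁⟩ := hmax.1
  set I : Ideal R := p₁ ⊔ Ideal.span {a} with hI
  have hIq : I ≤ q := sup_le hp₁q ((Ideal.span_le).2 (Set.singleton_subset_iff.2 haq))
  obtain ⟨q₁, hq₁min, hq₁q⟩ := @Ideal.exists_minimalPrimes_le _ _ I q hq hIq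
  have hq₁prime : q₁.IsPrime := hq₁min.1.1
  have hIq₁ : I ≤ q₁ := hq₁min.1.2
  have haq₁ : a ∈ q₁ := by
    apply hIq₁
    exact le_sup_right (α := Ideal R) (Ideal.subset_span rfl : a ∈ Ideal.span {a})
  refine ⟨p₁, q₁, hp₁prime, hq₁prime, hpp₁, le_sup_left.trans hIq₁, hq₁q, ?_, ?_⟩
  · intro e
    exact hap₁ (e ▸ haq₁)
  · intro r hrprime hpr hrq
    by_cases har : a ∈ r
    · right
      have hIr : I ≤ r := sup_le hpr ((Ideal.span_le).2 (Set.singleton_subset_iff.2 har))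
      exact le_antisymm hrq (hq₁min.2 ⟨hrprime, hIr⟩ hrq)
    · left
      have hrS : r ∈ S := ⟨hrprime, hpp₁'.trans hpr, hrq.trans hq₁q, har⟩
      exact le_antisymm (hmax.2 hrS hpr) hpr

/-- The "jump property" of a topological space: any strict specialization contains an
adjacent (immediate) specialization pair. -/
def JumpProp (α : Type*) [TopologicalSpace α] : Prop :=
  ∀ x y : α, Spz x y → x ≠ y → ∃ a b : α, Spz x a ∧ Spz a b ∧ Spz b y ∧ a ≠ b ∧
    ∀ z, Spz a z → Spz z b → z = a ∨ z = b

lemma jumpProp_primeSpectrum (R : Type*) [CommRing R] : JumpProp (PrimeSpectrum R) := by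
  intro x y h hne
  have hle : x ≤ y := (PrimeSpectrum.le_iff_specializes x y).2 (spz_iff_specializes.1 h)
  have hlt : x.asIdeal < y.asIdeal :=
    lt_of_le_of_ne hle fun e => hne (PrimeSpectrum.ext e)
  obtain ⟨p₁, q₁, hp₁, hq₁, hxp, hpq, hqy, hnepq, hadj⟩ :=
    exists_adjacent_primes x.asIdeal y.asIdeal x.isPrime y.isPrime hlt
  have spz_of_le : ∀ u v : PrimeSpectrum R, u.asIdeal ≤ v.asIdeal → Spz u v := fun u v huv =>
    spz_iff_specializes.2 ((PrimeSpectrum.le_iff_specializes u v).1 huv)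
  have le_of_spz : ∀ u v : PrimeSpectrum R, Spz u v → u.asIdeal ≤ v.asIdeal := fun u v huv =>
    (PrimeSpectrum.le_iff_specializes u v).2 (spz_iff_specializes.1 huv)
  refine ⟨⟨p₁, hp₁⟩, ⟨q₁, hq₁⟩, spz_of_le _ _ hxp, spz_of_le _ _ hpq, spz_of_le _ _ hqy,
    fun e => hnepq (congrArg PrimeSpectrum.asIdeal e), ?_⟩
  intro z hz1 hz2
  rcases hadj z.asIdeal z.isPrime (le_of_spz _ _ hz1) (le_of_spz _ _ hz2) with h | h
  · exact Or.inl (PrimeSpectrum.ext h)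
  · exact Or.inr (PrimeSpectrum.ext h)

lemma JumpProp.transfer {α β : Type*} [TopologicalSpace α] [TopologicalSpace β]
    {g : α → β} (hg : Topology.IsOpenEmbedding g) (hJ : JumpProp α)
    {x y : β} (hy : y ∈ Set.range g) (h : Spz x y) (hne : x ≠ y) :
    ∃ a b : β, Spz x a ∧ Spz a b ∧ Spz b y ∧ a ≠ b ∧
      ∀ z, Spz a z → Spz z b → z = a ∨ z = b := by
  have hxr : x ∈ Set.range g := (spz_iff_specializes.1 h).mem_open hg.isOpen_range hy
  obtain ⟨x₀, rfl⟩ := hxr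
  obtain ⟨y₀, rfl⟩ := hy
  have hxy₀ : Spz x₀ y₀ := spz_iff_specializes.2
    (hg.toIsInducing.specializes_iff.1 (spz_iff_specializes.1 h))
  have hne₀ : x₀ ≠ y₀ := fun e => hne (congrArg g e)
  obtain ⟨a₀, b₀, h1, h2, h3, hne', hadj⟩ := hJ x₀ y₀ hxy₀ hne₀
  have hmap : ∀ u v : α, Spz u v → Spz (g u) (g v) := fun u v huv =>
    spz_iff_specializes.2 ((spz_iff_specializes.1 huv).map hg.continuous)
  refine ⟨g a₀, g b₀, hmap _ _ h1, hmap _ _ h2, hmap _ _ h3,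
    fun e => hne' (hg.injective e), ?_⟩
  intro z hz1 hz2
  have hzr : z ∈ Set.range g :=
    (spz_iff_specializes.1 hz2).mem_open hg.isOpen_range ⟨b₀, rfl⟩
  obtain ⟨z₀, rfl⟩ := hzr
  have hz1' : Spz a₀ z₀ := spz_iff_specializes.2
    (hg.toIsInducing.specializes_iff.1 (spz_iff_specializes.1 hz1))
  have hz2' : Spz z₀ b₀ := spz_iff_specializes.2
    (hg.toIsInducing.specializes_iff.1 (spz_iff_specializes.1 hz2))
  rcases hadj z₀ hz1' hz2' with h | h
  · exact Or.inl (congrArg g h)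
  · exact Or.inr (congrArg g h)

lemma jumpProp_spec (R : CommRingCat) : JumpProp ((Spec R : Scheme)) := by
  intro x y h hne
  exact jumpProp_primeSpectrum R x y h hne

lemma scheme_jump {X : Scheme} : JumpProp X := by
  intro x y h hne
  set 𝒰 := X.affineOpenCover
  set i := 𝒰.idx y
  have hemb : Topology.IsOpenEmbedding (𝒰.f i).base := (𝒰.f i).isOpenEmbedding
  exact JumpProp.transfer hemb (jumpProp_spec (𝒰.X i)) (𝒰.covers y) h hne

end Jump

section Krull
variable {β : Type*} [TopologicalSpace β] [T0Space β]

open TopologicalSpace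

/-- The irreducible closed subset given by the closure of a point. -/
noncomputable def irrCl (u : β) : IrreducibleCloseds β :=
  ⟨closure {u}, isIrreducible_singleton.closure, isClosed_closure⟩

lemma irrCl_le_irrCl {u v : β} (h : Spz u v) : irrCl v ≤ irrCl u := by
  show (irrCl v : Set β) ⊆ (irrCl u : Set β)
  exact closure_minimal (Set.singleton_subset_iff.2 h) isClosed_closure

lemma irrCl_lt_irrCl {u v : β} (h : Spz u v) (hne : u ≠ v) : irrCl v < irrCl u := by
  refine lt_of_le_of_ne (irrCl_le_irrCl h) fun e => hne ?_
  have huv : u ∈ closure ({v} : Set β) := by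
    have : u ∈ (irrCl u : Set β) := subset_closure rfl
    rw [← e] at this
    exact this
  exact ((spz_iff_specializes.1 huv).antisymm (spz_iff_specializes.1 h)).eq.symm

lemma krull_chain_bound {γ : Type*} [Preorder γ] (g : ℕ → γ) (n : ℕ)
    (hg : ∀ i < n, g (i + 1) < g i) : (n : WithBot ℕ∞) ≤ Order.krullDim γ := by
  let p : LTSeries γ :=
    ⟨n, fun i => g (n - i.val), by
      intro i
      have hi : i.val < n := i.isLt
      have h1 : n - i.castSucc.val = (n - i.val - 1) + 1 := by
        simp only [Fin.coe_castSucc]; omega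
      have h2 : n - i.succ.val = n - i.val - 1 := by
        simp only [Fin.val_succ]; omega
      show g (n - i.castSucc.val) < g (n - i.succ.val)
      rw [h1, h2]
      exact hg (n - i.val - 1) (by omega)⟩
  simpa using Order.LTSeries.length_le_krullDim p

lemma exists_nat_ge_topologicalKrullDim (hdim : topologicalKrullDim β < ⊤) :
    ∃ d : ℕ, topologicalKrullDim β ≤ ((d : ℕ∞) : WithBot ℕ∞) := by
  rcases hD : topologicalKrullDim β with _ | e
  · exact ⟨0, bot_le⟩
  · have he : e ≠ ⊤ := by
      rintro rfl
      rw [hD] at hdim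
      exact absurd hdim (lt_irrefl _)
    refine ⟨e.toNat, ?_⟩
    rw [ENat.coe_toNat he]
    exact le_rfl

end Krull

section PtLen
variable {α : Type*} [TopologicalSpace α] [T0Space α] {d : ℕ}

lemma ptLength_eq (hcat : Catenaire α) (x : α) :
    ptLength x = ⨆ b ∈ closure ({x} : Set α), specLength x b := by
  unfold ptLength setLength
  apply le_antisymm
  · refine iSup₂_le fun a ha => iSup₂_le fun b hb => iSup_le fun hab => ?_
    have hxa : Spz x a := ha
    have h := hcat x a b hxa hab
    have hle : specLength a b ≤ specLength x b := h ▸ le_add_self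
    exact hle.trans (le_biSup (fun b => specLength x b) hb)
  · refine iSup₂_le fun b hb => ?_
    have hx : x ∈ closure ({x} : Set α) := subset_closure rfl
    have hxb : Spz x b := hb
    calc specLength x b ≤ ⨆ (_ : Spz x b), specLength x b :=
          le_iSup (fun _ : Spz x b => specLength x b) hxb
      _ ≤ ⨆ b' ∈ closure ({x} : Set α), ⨆ (_ : Spz x b'), specLength x b' :=
          le_biSup (fun b' => ⨆ (_ : Spz x b'), specLength x b') hb
      _ ≤ _ := le_biSup
          (fun a => ⨆ b' ∈ closure ({x} : Set α), ⨆ (_ : Spz a b'), specLength a b') hx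

lemma ptLength_le_coe (hbd : ∀ u v : α, specLength u v ≤ (d : ℕ∞)) (x : α) :
    ptLength x ≤ (d : ℕ∞) := by
  unfold ptLength setLength
  exact iSup₂_le fun a _ => iSup₂_le fun b _ => iSup_le fun _ => hbd a b

lemma spec_le_ptLength (hcat : Catenaire α) {x b : α} (h : Spz x b) :
    specLength x b ≤ ptLength x := by
  rw [ptLength_eq hcat]
  exact le_biSup (fun b => specLength x b) h

lemma ptLength_add_le (hcat : Catenaire α) {u v : α} (h : Spz u v) :
    specLength u v + ptLength v ≤ ptLength u := by
  have hrw := ENat.add_biSup' (a := specLength u v)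
    (p := fun b => b ∈ closure ({v} : Set α)) ⟨v, subset_closure rfl⟩
    (f := fun b => specLength v b)
  rw [ptLength_eq hcat v, hrw]
  refine iSup₂_le fun b hb => ?_
  rw [← hcat u v b h hb]
  exact spec_le_ptLength hcat (h.trans' hb)

lemma exists_coe_of_le_coe {a : ℕ∞} (h : a ≤ (d : ℕ∞)) : ∃ m : ℕ, a = (m : ℕ∞) ∧ m ≤ d := by
  have hne : a ≠ ⊤ := by
    intro e
    rw [e] at h
    exact absurd (h.trans_lt (by simp)) (lt_irrefl _)
  refine ⟨a.toNat, (ENat.coe_toNat hne).symm, ?_⟩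
  have := (ENat.coe_toNat hne).symm ▸ h
  exact_mod_cast this

lemma descend_one (hcat : Catenaire α) (hbd : ∀ u v : α, specLength u v ≤ (d : ℕ∞))
    (x : α) (k : ℕ) (hk : ptLength x = ((k : ℕ∞) + 1)) :
    ∃ x', Spz x x' ∧ specLength x x' = 1 ∧ ptLength x' = (k : ℕ∞) := by
  have hex : ∃ b ∈ closure ({x} : Set α), ((k : ℕ∞) + 1) ≤ specLength x b := by
    by_contra hcon
    push_neg at hcon
    have hle : ptLength x ≤ (k : ℕ∞) := by
      rw [ptLength_eq hcat]
      refine iSup₂_le fun b hb => ?_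
      obtain ⟨m, hm, hmd⟩ := exists_coe_of_le_coe (hbd x b)
      have := hcon b hb
      rw [hm] at this ⊢
      have hmk : (m : ℕ∞) < (k : ℕ∞) + 1 := this
      have : m < k + 1 := by exact_mod_cast hmk
      exact_mod_cast Nat.lt_succ_iff.1 this
    rw [hk] at hle
    have : (k : ℕ∞) + 1 ≤ (k : ℕ∞) := hle
    have hh : k + 1 ≤ k := by exact_mod_cast this
    omega
  obtain ⟨b, hb, hble⟩ := hex
  have hxb : Spz x b := hb
  have hbeq : specLength x b = (k : ℕ∞) + 1 :=
    le_antisymm (hk ▸ spec_le_ptLength hcat hxb) hble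
  have hble' : ((k + 1 : ℕ) : ℕ∞) ≤ specLength x b := by
    push_cast
    exact hble
  obtain ⟨m, hm1, c, hc0, hcm, hcc⟩ := exists_ge_of_le_specLength (by omega) hble'
  have hmle : (m : ℕ∞) ≤ (k : ℕ∞) + 1 := hbeq ▸ chain_le_specLength hc0 hcm hcc
  have hmeq : m = k + 1 := by
    have : m ≤ k + 1 := by exact_mod_cast hmle
    omega
  subst hmeq
  set x' := c 1 with hx'
  have hxx' : Spz x x' := by
    rw [← hc0]
    exact (hcc 0 (by omega)).1
  have hx'b : Spz x' b := by
    rw [← hcm]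
    exact hcc.spz_le (by omega) le_rfl
  have hA : (1 : ℕ∞) ≤ specLength x x' :=
    one_le_specLength hxx' (by rw [← hc0]; exact (hcc 0 (by omega)).2)
  have hB : ((k : ℕ)  : ℕ∞) ≤ specLength x' b := by
    refine chain_le_specLength (c := fun t => c (t + 1)) rfl ?_ ?_
    · show c (k + 1) = b
      exact hcm
    · intro i hi
      exact hcc (i + 1) (by omega)
  have hsum : specLength x x' + specLength x' b = (k : ℕ∞) + 1 := by
    rw [← hcat x x' b hxx' hx'b]
    exact hbeq
  obtain ⟨A, hAeq, _⟩ := exists_coe_of_le_coe (hbd x x')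
  obtain ⟨B, hBeq, _⟩ := exists_coe_of_le_coe (hbd x' b)
  rw [hAeq, hBeq] at hsum
  rw [hAeq] at hA
  rw [hBeq] at hB
  have hsum' : A + B = k + 1 := by exact_mod_cast hsum
  have hA' : 1 ≤ A := by exact_mod_cast hA
  have hB' : k ≤ B := by exact_mod_cast hB
  have hA1 : A = 1 := by omega
  have hBk : B = k := by omega
  refine ⟨x', hxx', by rw [hAeq, hA1]; norm_cast, ?_⟩
  apply le_antisymm
  · rw [ptLength_eq hcat]
    refine iSup₂_le fun b' hb' => ?_
    have hx'b' : Spz x' b' := hb'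
    have hxb' : Spz x b' := hxx'.trans' hx'b'
    have h1 : specLength x b' = specLength x x' + specLength x' b' :=
      hcat x x' b' hxx' hx'b'
    have h2 : specLength x b' ≤ (k : ℕ∞) + 1 := hk ▸ spec_le_ptLength hcat hxb'
    rw [h1, hAeq, hA1] at h2
    obtain ⟨m', hm', _⟩ := exists_coe_of_le_coe (hbd x' b')
    rw [hm'] at h2 ⊢
    have : 1 + m' ≤ k + 1 := by exact_mod_cast h2
    exact_mod_cast (by omega : m' ≤ k)
  · have hfin : specLength x' b = (k : ℕ∞) := by rw [hBeq, hBk]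
    exact hfin ▸ spec_le_ptLength hcat hx'b

lemma descend (hcat : Catenaire α) (hbd : ∀ u v : α, specLength u v ≤ (d : ℕ∞))
    (x : α) (k j : ℕ) (hjk : j ≤ k) (hk : ptLength x = (k : ℕ∞)) :
    ∃ x', Spz x x' ∧ specLength x x' = (j : ℕ∞) ∧ ptLength x' = ((k - j : ℕ) : ℕ∞) := by
  induction j with
  | zero =>
    refine ⟨x, spz_refl x, by simpa using specLength_self x, by simpa using hk⟩
  | succ j ih =>
    obtain ⟨x', hspz, hlen, hpt⟩ := ih (by omega)
    have hkj : ((k - j : ℕ) : ℕ∞) = ((k - (j+1) : ℕ) : ℕ∞) + 1 := by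
      have : (k - j : ℕ) = (k - (j+1)) + 1 := by omega
      rw [this]
      push_cast
      ring
    rw [hkj] at hpt
    obtain ⟨x'', hspz', hlen', hpt'⟩ := descend_one hcat hbd x' (k - (j+1)) hpt
    refine ⟨x'', hspz.trans' hspz', ?_, hpt'⟩
    rw [hcat x x' x'' hspz hspz', hlen, hlen']
    push_cast
    ring

end PtLen

/-- A length-preserving and level-separated morphism between irreducible
schemes, with `X` caténaire and `dim Y < ∞`, is injective on points. -/
theorem injective_of_lengthPreserving_levelSeparated {X Y : Scheme} (f : X ⟶ Y)
    [IrreducibleSpace X] [IrreducibleSpace Y]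
    (hdim : topologicalKrullDim Y < ⊤) (hcat : Catenaire X)
    (hlp : LengthPreserving f.base) (hls : LevelSeparated f.base) :
    Function.Injective f.base := by
  intro x₁ x₂ heq
  by_contra hne
  obtain ⟨d, hd⟩ := exists_nat_ge_topologicalKrullDim hdim
  have hdtop : (d : ℕ∞) ≠ ⊤ := by simp
  -- every strict chain in X has length at most d
  have hchainX : ∀ (n : ℕ) (c : ℕ → X), IsSpzChain c n → n ≤ d := by
    intro n c hc
    rcases Nat.eq_zero_or_pos n with rfl | hpos
    · exact Nat.zero_le d
    have hjump : ∀ i : ℕ, ∃ ab : X × X, i < n → Spz (c i) ab.1 ∧ Spz ab.1 ab.2 ∧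
        Spz ab.2 (c (i + 1)) ∧ ab.1 ≠ ab.2 ∧
        ∀ z, Spz ab.1 z → Spz z ab.2 → z = ab.1 ∨ z = ab.2 := by
      intro i
      by_cases hi : i < n
      · obtain ⟨a, b, h1, h2, h3, h4, h5⟩ := scheme_jump (c i) (c (i + 1)) (hc i hi).1 (hc i hi).2
        exact ⟨(a, b), fun _ => ⟨h1, h2, h3, h4, h5⟩⟩
      · exact ⟨(c i, c i), fun h => absurd h hi⟩
    choose ab hab using hjump
    -- each jump pair has specLength one
    have hone : ∀ i, i < n → specLength (ab i).1 (ab i).2 = 1 := by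
      intro i hi
      obtain ⟨h1, h2, h3, h4, h5⟩ := hab i hi
      refine le_antisymm ?_ (one_le_specLength h2 h4)
      refine specLength_le_iff.2 fun m hm => ?_
      obtain ⟨e, he0, hem, hec⟩ := hm
      by_contra hgt
      push_neg at hgt
      have hm2 : 2 ≤ m := by
        by_contra hm2
        push_neg at hm2
        interval_cases m
        · simp at hgt
        · exact absurd le_rfl (by exact_mod_cast hgt.not_ge)
      have h6 : Spz (ab i).1 (e 1) := by
        rw [← he0]
        exact (hec 0 (by omega)).1
      have h7 : Spz (e 1) (ab i).2 := by
        rw [← hem]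
        exact hec.spz_le (by omega) le_rfl
      rcases h5 (e 1) h6 h7 with h | h
      · exact (hec 0 (by omega)).2 (by rw [he0, h])
      · have h8 : Spz (e 1) (e 2) := (hec 1 (by omega)).1
        have h9 : Spz (e 2) (ab i).2 := by
          rw [← hem]
          exact hec.spz_le (by omega) le_rfl
        have h8' : Spz (ab i).2 (e 2) := by rw [← h]; exact h8
        rcases h5 (e 2) (h2.trans' h8') h9 with h' | h'
        · exact h4 (h2.antisymm' (h' ▸ h8' : Spz (ab i).2 (ab i).1))
        · exact (hec 1 (by omega)).2 (by rw [h, h'])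
    -- push to Y and build a strictly decreasing chain of irreducible closed subsets
    have hfne : ∀ i, i < n → f.base (ab i).1 ≠ f.base (ab i).2 := by
      intro i hi hfeq
      obtain ⟨h1, h2, h3, h4, h5⟩ := hab i hi
      have hfin : specLength (ab i).1 (ab i).2 < ⊤ := by
        rw [hone i hi]
        exact lt_top_iff_ne_top.2 (by simp)
      have := hlp (ab i).1 (ab i).2 h2 hfin
      rw [hone i hi, hfeq, specLength_self] at this
      exact (by norm_num : ¬ ((0 : ℕ∞) = 1)) this
    set v : ℕ → Y := fun t => if t < n then f.base (ab t).1 else f.base (ab (n - 1)).2 with hv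
    have hstep : ∀ i < n, irrCl (v (i + 1)) < irrCl (v i) := by
      intro i hi
      obtain ⟨h1, h2, h3, h4, h5⟩ := hab i hi
      have hvi : v i = f.base (ab i).1 := by simp [hv, hi]
      have hlt1 : irrCl (f.base (ab i).2) < irrCl (f.base (ab i).1) :=
        irrCl_lt_irrCl (h2.map' f.base.hom.continuous) (hfne i hi)
      have hle2 : irrCl (v (i + 1)) ≤ irrCl (f.base (ab i).2) := by
        by_cases hi1 : i + 1 < n
        · have hvi1 : v (i + 1) = f.base (ab (i + 1)).1 := by simp [hv, hi1]
          obtain ⟨h1', h2', h3', h4', h5'⟩ := hab (i + 1) hi1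
          have : Spz (ab i).2 (ab (i + 1)).1 := h3.trans' h1'
          rw [hvi1]
          exact irrCl_le_irrCl (this.map' f.base.hom.continuous)
        · have hieq : i = n - 1 := by omega
          have hvi1 : v (i + 1) = f.base (ab (n - 1)).2 := by
            simp only [hv]
            rw [if_neg (by omega)]
          rw [hvi1, ← hieq]
      rw [hvi]
      exact lt_of_le_of_lt hle2 hlt1
    have := (krull_chain_bound (fun t => irrCl (v t)) n hstep).trans hd
    have hnd : ((n : ℕ∞) : WithBot ℕ∞) ≤ ((d : ℕ∞) : WithBot ℕ∞) := by exact_mod_cast this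
    have : (n : ℕ∞) ≤ (d : ℕ∞) := by exact_mod_cast hnd
    exact_mod_cast this
  -- all specialization lengths in X are bounded by d
  have hbdX : ∀ u v : X, specLength u v ≤ (d : ℕ∞) := by
    intro u v
    refine specLength_le_iff.2 fun n hn => ?_
    obtain ⟨c, h0, hn', hc⟩ := hn
    exact_mod_cast hchainX n c hc
  have hfinX : ∀ u v : X, specLength u v < ⊤ := fun u v =>
    lt_of_le_of_lt (hbdX u v) (lt_top_iff_ne_top.2 hdtop)
  -- Case 1 : connected pairs
  have case1 : ∀ u v : X, Spz u v → u ≠ v → f.base u = f.base v → False := by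
    intro u v h hne' heq'
    have h1 : 1 ≤ specLength u v := one_le_specLength h hne'
    have h2 := hlp u v h (hfinX u v)
    rw [heq', specLength_self] at h2
    rw [← h2] at h1
    exact (by norm_num : ¬ ((1 : ℕ∞) ≤ 0)) h1
  -- Case 2 : disconnected pairs
  have core : ∀ u v : X, ¬SpConnected u v → f.base u = f.base v →
      ptLength v ≤ ptLength u → False := by
    intro u v hconn heq' hle
    obtain ⟨k₁, hk1, _⟩ := exists_coe_of_le_coe (ptLength_le_coe hbdX u)
    obtain ⟨k₂, hk2, _⟩ := exists_coe_of_le_coe (ptLength_le_coe hbdX v)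
    have hk21 : k₂ ≤ k₁ := by
      rw [hk1, hk2] at hle
      exact_mod_cast hle
    obtain ⟨u', hspz, hlen, hpt⟩ := descend hcat hbdX u k₁ (k₁ - k₂) (by omega) hk1
    have hpt' : ptLength u' = (k₂ : ℕ∞) := by
      rw [hpt]
      congr 1
      omega
    by_cases hu'v : Spz u' v
    · exact hconn (Or.inl (hspz.trans' hu'v))
    by_cases hvu' : Spz v u'
    · -- derive a contradiction via lengths
      have h1 := hlp v u' hvu' (hfinX v u')
      have h2 := hlp u u' hspz (hfinX u u')
      rw [hlen] at h2
      rw [heq'] at h2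
      rw [h2] at h1
      -- h1 : (k₁ - k₂ : ℕ) = specLength v u'
      have h3 := ptLength_add_le hcat hvu'
      rw [← h1, hpt', hk2] at h3
      have h4 : (k₁ - k₂) + k₂ ≤ k₂ := by exact_mod_cast h3
      have hk12 : k₁ = k₂ := by omega
      have h5 : specLength v u' = 0 := by
        rw [← h1]
        norm_cast
        omega
      have hvu'eq : v = u' := by
        by_contra hne''
        have := one_le_specLength hvu' hne''
        rw [h5] at this
        exact (by norm_num : ¬ ((1 : ℕ∞) ≤ 0)) this
      exact hconn (Or.inl (hvu'eq ▸ hspz))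
    have hdisc : ¬SpConnected u' v := fun h => h.elim hu'v hvu'
    have heqpt : ptLength u' = ptLength v := by rw [hpt', hk2]
    have := hls u' v hdisc heqpt
    apply this
    right
    have : Spz (f.base u) (f.base u') := hspz.map' f.base.hom.continuous
    rw [heq'] at this
    exact this
  rcases em (SpConnected x₁ x₂) with hconn | hconn
  · rcases hconn with h | h
    · exact case1 x₁ x₂ h hne heq
    · exact case1 x₂ x₁ h (Ne.symm hne) heq.symm
  · rcases le_total (ptLength x₂) (ptLength x₁) with hle | hle
    · exact core x₁ x₂ hconn heq hle
    · exact core x₂ x₁ (fun h => hconn h.symm) heq.symm hle
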